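/- Let R be a commutative ℝ-algebra and σ ∈ R with σ² = 0. Let a, b, c, d, e be positive reals, χ = ac/(bd), r = √2·ea/b, s = √2·be/a, and let x₁, x₂, y, ρ, λ be the basic-calculation coordinates. Set A = r·(0,1,0,0,0), C = s·(1,0,0,0,0), D = (x₁, x₂, −y, ρ, λ). Then for the super Minkowski pairing: ⟨A,D⟩ = d², ⟨C,D⟩ = c², ⟨D,D⟩ = 0; moreover −(x₁/x₂)^(1/4)·λ/√(x₁x₂) = σ = (x₂/x₁)^(1/4)·ρ/√(x₁x₂), and the fermion label of D vanishes: √x₂·ρ − ((−y)/√x₂)·λ = 0, so D lies on the special light cone. -/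

import Mathlib

/-- The super Minkowski pairing of quintuples `(x₁,x₂,y,φ,θ)` with entries in a
commutative ℝ-algebra: `⟨A,A'⟩ = (x₁x₂' + x₁'x₂)/2 − yy' + φθ' + φ'θ`. -/
noncomputable def superPairing {R : Type*} [CommRing R] [Algebra ℝ R]
    (A A' : R × R × R × R × R) : R :=
  ((1 : ℝ)/2) • (A.1 * A'.2.1 + A'.1 * A.2.1) - A.2.2.1 * A'.2.2.1
    + A.2.2.2.1 * A'.2.2.2.2 + A'.2.2.2.1 * A.2.2.2.2

/-- Basic calculation: the point `D` given by the basic-calculation coordinates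
realizes the λ-lengths `d, c` with `A, C`, is isotropic, has `σ` as its
μ-invariant-type odd coordinate, and has vanishing fermion label, hence lies
on the special light cone. -/
theorem stmt_2 (R : Type*) [CommRing R] [Algebra ℝ R]
    (σ : R) (hσ : σ * σ = 0)
    (a b c d e : ℝ) (ha : 0 < a) (hb : 0 < b) (hc : 0 < c) (hd : 0 < d) (he : 0 < e)
    (χ r s x₁ x₂ y : ℝ) (ρ lam : R)
    (hχ : χ = a * c / (b * d))
    (hr : r = Real.sqrt 2 * (e * a) / b)
    (hs : s = Real.sqrt 2 * (b * e) / a)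
    (hx₁ : x₁ = Real.sqrt 2 * (c * d / e) * χ⁻¹)
    (hx₂ : x₂ = Real.sqrt 2 * (c * d / e) * χ)
    (hy : y = Real.sqrt 2 * (c * d / e))
    (hρ : ρ = (Real.sqrt 2 * (c * d / e) * χ ^ (-(1 : ℝ)/2)) • σ)
    (hlam : lam = (-(Real.sqrt 2 * (c * d / e) * χ ^ ((1 : ℝ)/2))) • σ) :
    superPairing (0, algebraMap ℝ R r, 0, 0, 0)
        (algebraMap ℝ R x₁, algebraMap ℝ R x₂, algebraMap ℝ R (-y), ρ, lam)
      = algebraMap ℝ R (d ^ 2) ∧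
    superPairing (algebraMap ℝ R s, 0, 0, 0, 0)
        (algebraMap ℝ R x₁, algebraMap ℝ R x₂, algebraMap ℝ R (-y), ρ, lam)
      = algebraMap ℝ R (c ^ 2) ∧
    superPairing (algebraMap ℝ R x₁, algebraMap ℝ R x₂, algebraMap ℝ R (-y), ρ, lam)
        (algebraMap ℝ R x₁, algebraMap ℝ R x₂, algebraMap ℝ R (-y), ρ, lam)
      = 0 ∧
    (-((x₁ / x₂) ^ ((1 : ℝ)/4) / Real.sqrt (x₁ * x₂))) • lam = σ ∧
    ((x₂ / x₁) ^ ((1 : ℝ)/4) / Real.sqrt (x₁ * x₂)) • ρ = σ ∧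
    Real.sqrt x₂ • ρ - ((-y) / Real.sqrt x₂) • lam = 0 := by
  have h2 : Real.sqrt 2 * Real.sqrt 2 = 2 := Real.mul_self_sqrt (by norm_num)
  have hχ0 : 0 < χ := by rw [hχ]; positivity
  have hy0 : 0 < y := by rw [hy]; positivity
  have hrpow : χ ^ (-(1:ℝ)/2) * χ ^ ((1:ℝ)/2) = 1 := by
    rw [← Real.rpow_add hχ0]; norm_num
  rw [← hy] at hx₁ hx₂ hρ hlam
  have hχ' : χ ≠ 0 := hχ0.ne'
  have hxy : x₁ * x₂ = y * y := by
    rw [hx₁, hx₂]; field_simp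
  have hsq : Real.sqrt (x₁ * x₂) = y := by
    rw [hxy, Real.sqrt_mul_self hy0.le]
  refine ⟨?_, ?_, ?_, ?_, ?_, ?_⟩
  · simp only [superPairing, zero_mul, mul_zero, add_zero, zero_add, sub_zero]
    rw [← map_mul, Algebra.smul_def, ← map_mul]
    congr 1
    rw [hx₁, hy, hr, hχ]
    field_simp
    ring_nf
    linear_combination h2
  · simp only [superPairing, zero_mul, mul_zero, add_zero, zero_add, sub_zero]
    rw [← map_mul, Algebra.smul_def, ← map_mul]
    congr 1
    rw [hx₂, hy, hs, hχ]
    field_simp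
    ring_nf
    linear_combination h2
  · have hrl : ρ * lam = 0 := by
      rw [hρ, hlam, smul_mul_assoc, mul_smul_comm, hσ, smul_zero, smul_zero]
    simp only [superPairing, hrl, add_zero]
    rw [Algebra.smul_def]
    simp only [← map_mul, ← map_add, ← map_sub]
    rw [show (1/2:ℝ) * (x₁ * x₂ + x₁ * x₂) - -y * -y = 0 by linear_combination hxy, map_zero]
  · have h14 : (x₁ / x₂) ^ ((1:ℝ)/4) = χ ^ (-(1:ℝ)/2) := by
      have h : x₁ / x₂ = χ ^ ((-2 : ℝ)) := by
        rw [hx₁, hx₂, show ((-2):ℝ) = ((-2:ℤ):ℝ) by norm_num, Real.rpow_intCast]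
        field_simp
      rw [h, ← Real.rpow_mul hχ0.le]
      norm_num
    rw [h14, hsq, hlam, smul_smul,
      show -(χ ^ (-(1:ℝ)/2) / y) * -(y * χ ^ ((1:ℝ)/2)) = 1 by
        field_simp
        rw [neg_div] at hrpow
        linear_combination hrpow,
      one_smul]
  · have h15 : (x₂ / x₁) ^ ((1:ℝ)/4) = χ ^ ((1:ℝ)/2) := by
      have h : x₂ / x₁ = χ ^ ((2 : ℝ)) := by
        rw [hx₁, hx₂, show ((2):ℝ) = ((2:ℤ):ℝ) by norm_num, Real.rpow_intCast]
        field_simp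
      rw [h, ← Real.rpow_mul hχ0.le]
      norm_num
    rw [h15, hsq, hρ, smul_smul,
      show χ ^ ((1:ℝ)/2) / y * (y * χ ^ (-(1:ℝ)/2)) = 1 by
        field_simp
        rw [neg_div] at hrpow
        linear_combination hrpow,
      one_smul]
  · have hsx₂ : Real.sqrt x₂ = Real.sqrt y * χ ^ ((1:ℝ)/2) := by
      rw [hx₂, Real.sqrt_mul hy0.le, Real.sqrt_eq_rpow χ]
    have hu : Real.sqrt y * Real.sqrt y = y := Real.mul_self_sqrt hy0.le
    have hu0 : Real.sqrt y ≠ 0 := by positivity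
    have hv0 : χ ^ ((1:ℝ)/2) ≠ 0 := by positivity
    rw [hsx₂, hρ, hlam, smul_smul, smul_smul, ← sub_smul,
      show Real.sqrt y * χ ^ ((1:ℝ)/2) * (y * χ ^ (-(1:ℝ)/2))
          - -y / (Real.sqrt y * χ ^ ((1:ℝ)/2)) * -(y * χ ^ ((1:ℝ)/2)) = 0 by
        field_simp
        rw [neg_div] at hrpow
        linear_combination (y * χ^((1:ℝ)/2) * χ^(-((1:ℝ)/2))) * hu + y^2 * hrpow,
      zero_smul]
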